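/- Fix bit strings v, v' ∈ {0,1}^n with Hamming distance at most t, and let k ≤ n - t. If a subset μ ⊆ [n] of size k is sampled uniformly at random (without replacement), then the probability that v and v' agree on all coordinates in μ is at least (1 - t/(n-k))^k. -/

import Mathlib

open Finset

private lemma key6 (n t k d : ℕ) (hd : d ≤ t) (h : k + t ≤ n) :
    ((1:ℝ) - (t:ℝ)/((n:ℝ)-(k:ℝ)))^k ≤ (((n-d).choose k : ℝ))/((n.choose k : ℝ)) := by
  rcases Nat.eq_zero_or_pos t with ht | ht
  · have hd0 : d = 0 := by omega
    subst ht; subst hd0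
    have hpos : (0:ℝ) < (n.choose k : ℝ) := by
      exact_mod_cast Nat.choose_pos (by omega : k ≤ n)
    simp only [Nat.cast_zero, zero_div, sub_zero, one_pow, Nat.sub_zero]
    rw [div_self (ne_of_gt hpos)]
  · have hkn : k < n := by omega
    have hchoose : ((n-d).choose k : ℝ)/(n.choose k : ℝ)
        = ((n-d).descFactorial k : ℝ)/((n.descFactorial k : ℝ)) := by
      rw [Nat.descFactorial_eq_factorial_mul_choose, Nat.descFactorial_eq_factorial_mul_choose]
      push_cast
      rw [mul_div_mul_left]
      positivity
    rw [hchoose, Nat.descFactorial_eq_prod_range, Nat.descFactorial_eq_prod_range]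
    push_cast
    rw [← Finset.prod_div_distrib]
    have hrw : ((1:ℝ) - (t:ℝ)/((n:ℝ)-(k:ℝ)))^k
        = ∏ _i ∈ Finset.range k, ((1:ℝ) - (t:ℝ)/((n:ℝ)-(k:ℝ))) := by
      rw [Finset.prod_const, Finset.card_range]
    rw [hrw]
    apply Finset.prod_le_prod
    · intro i _
      have h1 : (0:ℝ) < (n:ℝ) - k := by
        have : (k:ℝ) < n := by exact_mod_cast hkn
        linarith
      have h2 : (t:ℝ) ≤ (n:ℝ) - k := by
        have : (t:ℝ) + k ≤ n := by exact_mod_cast (by omega : t + k ≤ n)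
        linarith
      have := div_le_one_of_le₀ h2 h1.le
      linarith
    · intro i hi
      have hik : i < k := Finset.mem_range.1 hi
      have c1 : ((n - d - i : ℕ) : ℝ) = (n:ℝ) - d - i := by
        have : d + i ≤ n := by omega
        push_cast [Nat.sub_sub, Nat.cast_sub this]
        ring
      have c2 : ((n - i : ℕ) : ℝ) = (n:ℝ) - i := by
        have : i ≤ n := by omega
        push_cast [Nat.cast_sub this]
        ring
      rw [c1, c2]
      have hni : (0:ℝ) < (n:ℝ) - i := by
        have : (i:ℝ) < n := by exact_mod_cast (by omega : i < n)
        linarith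
      have hnk : (0:ℝ) < (n:ℝ) - k := by
        have : (k:ℝ) < n := by exact_mod_cast hkn
        linarith
      have hdt : (d:ℝ) ≤ t := by exact_mod_cast hd
      have hik' : (i:ℝ) ≤ k := by exact_mod_cast hik.le
      have ht' : (0:ℝ) ≤ t := by positivity
      rw [sub_div' (ne_of_gt hnk), div_le_div_iff₀ hnk hni]
      nlinarith [mul_nonneg (sub_nonneg.2 hdt) hnk.le, mul_nonneg ht' (sub_nonneg.2 hik')]

/-- If `v, v' ∈ {0,1}^n` have Hamming distance at most `t` and `k ≤ n - t`,
then a uniformly random `k`-subset `μ` of `[n]` satisfies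
`Pr[v and v' agree on all coordinates in μ] ≥ (1 - t/(n-k))^k`.
The probability is expressed as a ratio of counts of `k`-subsets. -/
theorem stmt6 (n t k : ℕ) (v v' : Fin n → Bool)
    (hdist : (univ.filter (fun i => v i ≠ v' i)).card ≤ t)
    (hk : k ≤ n - t) :
    ((1 : ℝ) - (t : ℝ) / ((n : ℝ) - (k : ℝ))) ^ k ≤
      ((((univ : Finset (Fin n)).powersetCard k).filter
          (fun μ => ∀ i ∈ μ, v i = v' i)).card : ℝ) /
        (((univ : Finset (Fin n)).powersetCard k).card : ℝ) := by
  set d := (univ.filter (fun i => v i ≠ v' i)).card with hdd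
  set A := (univ.filter (fun i => v i = v' i)) with hA
  have hfilt : ((univ : Finset (Fin n)).powersetCard k).filter
      (fun μ => ∀ i ∈ μ, v i = v' i) = A.powersetCard k := by
    ext μ
    simp only [Finset.mem_filter, Finset.mem_powersetCard, hA, Finset.subset_iff,
      Finset.mem_filter, Finset.mem_univ, true_and, Finset.subset_univ]
    tauto
  have hsum : A.card + d = n := by
    have h1 := Finset.card_filter_add_card_filter_not
      (s := (univ : Finset (Fin n))) (p := fun i => v i = v' i)
    simp only [Finset.card_univ, Fintype.card_fin] at h1
    have hne : (univ.filter (fun i => ¬ v i = v' i)).card = d := rfl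
    rw [hne] at h1
    exact h1
  have hcardA : A.card = n - d := by omega
  rw [hfilt, Finset.card_powersetCard, Finset.card_powersetCard, hcardA,
    Finset.card_univ, Fintype.card_fin]
  rcases Nat.eq_zero_or_pos k with hk0 | hk0
  · subst hk0
    simp
  · have htn : k + t ≤ n := by omega
    exact key6 n t k d hdist htn
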